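/- (Constraint violation bound) Under the same KL bound E_{s∼d_{π_k}}[KL(π_{k+1}∥π_k)[s]] ≤ δ + V and the constraint satisfaction of the surrogate J_C(π_k) + E_{s∼d_{π_k},a∼π_{k+1}}[Ā_C^{π_k}(s,a)] ≤ l, we have J_C(π_{k+1}) ≤ l + sqrt(2(δ + V)) · ν_C, where ν_C = σ^{π_{k+1}} max_s |E_{a∼π_{k+1}}[Ā_C^{π_k}(s,a)]|. -/

import Mathlib

open Finset


private lemma aux_g_deriv {t : ℝ} (ht : 0 < t) :
    HasDerivAt (fun t : ℝ => (t + 1) * Real.log t - 2 * t + 2)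
      (Real.log t + (t + 1) * t⁻¹ - 2) t := by
  have h1 : HasDerivAt (fun t : ℝ => (t + 1) * Real.log t)
      (1 * Real.log t + (t + 1) * t⁻¹) t :=
    ((hasDerivAt_id t).add_const 1).mul (Real.hasDerivAt_log ht.ne')
  have h2 : HasDerivAt (fun t : ℝ => 2 * t) 2 t := by simpa using (hasDerivAt_id t).const_mul 2
  have := (h1.sub h2).add_const 2
  refine this.congr_deriv ?_
  ring

private lemma aux_g_mono :
    MonotoneOn (fun t : ℝ => (t + 1) * Real.log t - 2 * t + 2) (Set.Ioi 0) := by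
  have hint : interior (Set.Ioi (0:ℝ)) = Set.Ioi 0 := interior_Ioi
  refine monotoneOn_of_hasDerivWithinAt_nonneg (convex_Ioi 0)
    (f' := fun t => Real.log t + (t + 1) * t⁻¹ - 2) ?_ ?_ ?_
  · intro t ht
    exact ((aux_g_deriv ht).continuousAt).continuousWithinAt
  · intro t ht
    rw [hint] at ht ⊢
    exact (aux_g_deriv ht).hasDerivWithinAt
  · intro t ht
    rw [hint] at ht
    have ht' : (0:ℝ) < t := ht
    have h1 : Real.log t⁻¹ ≤ t⁻¹ - 1 := Real.log_le_sub_one_of_pos (inv_pos.2 ht')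
    rw [Real.log_inv] at h1
    have h2 : (t + 1) * t⁻¹ = 1 + t⁻¹ := by field_simp
    rw [h2]
    linarith

private lemma aux_f_deriv {t : ℝ} (ht : 0 < t) :
    HasDerivAt (fun t : ℝ => 2 * (t + 2) * (t * Real.log t - t + 1) - 3 * (t - 1) ^ 2)
      (4 * ((t + 1) * Real.log t - 2 * t + 2)) t := by
  have hA : HasDerivAt (fun t : ℝ => t * Real.log t - t + 1) (Real.log t) t := by
    have := (((hasDerivAt_id t).mul (Real.hasDerivAt_log ht.ne')).sub
      (hasDerivAt_id t)).add_const 1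
    refine this.congr_deriv ?_
    simp [ht.ne']
  have hB : HasDerivAt (fun t : ℝ => 2 * (t + 2)) 2 t := by
    simpa using ((hasDerivAt_id t).add_const 2).const_mul 2
  have hD : HasDerivAt (fun t : ℝ => 3 * (t - 1) ^ 2) (3 * (2 * (t - 1))) t := by
    simpa using (((hasDerivAt_id t).sub_const 1).pow 2).const_mul 3
  have := (hB.mul hA).sub hD
  refine this.congr_deriv ?_
  ring

private lemma aux_fkey {t : ℝ} (ht : 0 < t) :
    3 * (t - 1) ^ 2 ≤ 2 * (t + 2) * (t * Real.log t - t + 1) := by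
  set f := fun t : ℝ => 2 * (t + 2) * (t * Real.log t - t + 1) - 3 * (t - 1) ^ 2 with hf
  have hg1 : (fun t : ℝ => (t + 1) * Real.log t - 2 * t + 2) 1 = 0 := by simp
  have hf1 : f 1 = 0 := by simp [hf]
  have key : 0 ≤ f t := by
    rcases le_total 1 t with h | h
    · have mono : MonotoneOn f (Set.Ici 1) := by
        refine monotoneOn_of_hasDerivWithinAt_nonneg (convex_Ici 1)
          (f' := fun t => 4 * ((t + 1) * Real.log t - 2 * t + 2)) ?_ ?_ ?_
        · intro x hx
          exact (aux_f_deriv (lt_of_lt_of_le one_pos hx)).continuousAt.continuousWithinAt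
        · intro x hx
          rw [interior_Ici] at hx
          exact (aux_f_deriv (lt_trans one_pos hx)).hasDerivWithinAt
        · intro x hx
          rw [interior_Ici] at hx
          have := aux_g_mono (Set.mem_Ioi.2 one_pos) (Set.mem_Ioi.2 (lt_trans one_pos hx))
            (le_of_lt hx)
          rw [hg1] at this
          have h2 : 0 ≤ (x + 1) * Real.log x - 2 * x + 2 := this
          show 0 ≤ 4 * ((x + 1) * Real.log x - 2 * x + 2)
          linarith
      have := mono (Set.mem_Ici.2 le_rfl) (Set.mem_Ici.2 h) h
      rw [hf1] at this
      exact this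
    · have anti : AntitoneOn f (Set.Ioc 0 1) := by
        refine antitoneOn_of_hasDerivWithinAt_nonpos (convex_Ioc 0 1)
          (f' := fun t => 4 * ((t + 1) * Real.log t - 2 * t + 2)) ?_ ?_ ?_
        · intro x hx
          exact (aux_f_deriv hx.1).continuousAt.continuousWithinAt
        · intro x hx
          rw [interior_Ioc] at hx
          exact (aux_f_deriv hx.1).hasDerivWithinAt
        · intro x hx
          rw [interior_Ioc] at hx
          have := aux_g_mono (Set.mem_Ioi.2 hx.1) (Set.mem_Ioi.2 one_pos) (le_of_lt hx.2)
          rw [hg1] at this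
          have h2 : (x + 1) * Real.log x - 2 * x + 2 ≤ 0 := this
          show 4 * ((x + 1) * Real.log x - 2 * x + 2) ≤ 0
          linarith
      have := anti (Set.mem_Ioc.2 ⟨ht, h⟩) (Set.mem_Ioc.2 ⟨one_pos, le_rfl⟩) h
      rw [hf1] at this
      exact this
  simp only [hf] at key
  linarith

private lemma aux_fkey2 {x y : ℝ} (hx : 0 < x) (hy : 0 < y) :
    3 * (x - y) ^ 2 ≤ 2 * (x + 2 * y) * (x * Real.log (x / y) - x + y) := by
  have ht : 0 < x / y := div_pos hx hy
  have hk := aux_fkey ht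
  have hxe : x = x / y * y := by field_simp
  calc 3 * (x - y) ^ 2 = y ^ 2 * (3 * (x / y - 1) ^ 2) := by
        rw [hxe]; field_simp
    _ ≤ y ^ 2 * (2 * (x / y + 2) * (x / y * Real.log (x / y) - x / y + 1)) :=
        mul_le_mul_of_nonneg_left hk (sq_nonneg y)
    _ = 2 * (x / y * y + 2 * y) * (x / y * y * Real.log (x / y) - x / y * y + y) := by ring
    _ = 2 * (x + 2 * y) * (x * Real.log (x / y) - x + y) := by rw [← hxe]

private lemma aux_pointwise {x y : ℝ} (hx : 0 ≤ x) (hy : 0 < y) :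
    |x - y| ^ 2 / (2 / 3 * (x + 2 * y)) ≤ x * Real.log (x / y) - x + y := by
  have hw : 0 < 2 / 3 * (x + 2 * y) := by positivity
  rw [sq_abs, div_le_iff₀ hw]
  rcases eq_or_lt_of_le hx with h | h
  · rw [← h]
    simp only [zero_div, Real.log_zero, mul_zero, zero_mul, sub_zero, zero_sub, neg_mul]
    nlinarith [hy.le]
  · nlinarith [aux_fkey2 h hy]

/-- Pinsker's inequality for finite probability vectors. -/
private lemma aux_pinsker {A : Type*} [Fintype A] (p q : A → ℝ)
    (hp : ∀ a, 0 ≤ p a) (hq : ∀ a, 0 < q a)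
    (hps : ∑ a, p a = 1) (hqs : ∑ a, q a = 1) :
    (1 / 2 * ∑ a, |p a - q a|) ^ 2 ≤ 1 / 2 * ∑ a, p a * Real.log (p a / q a) := by
  have hg : ∀ a ∈ Finset.univ (α := A), 0 < 2 / 3 * (p a + 2 * q a) := by
    intro a _
    have := hp a
    have := hq a
    positivity
  have hcs := sq_sum_div_le_sum_sq_div Finset.univ (fun a => |p a - q a|) hg
  have hgs : ∑ a, 2 / 3 * (p a + 2 * q a) = 2 := by
    rw [← Finset.mul_sum, Finset.sum_add_distrib, hps, ← Finset.mul_sum, hqs]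
    norm_num
  rw [hgs] at hcs
  have hterm : ∑ a, |p a - q a| ^ 2 / (2 / 3 * (p a + 2 * q a)) ≤
      ∑ a, (p a * Real.log (p a / q a) - p a + q a) :=
    Finset.sum_le_sum fun a _ => aux_pointwise (hp a) (hq a)
  have hsum : ∑ a, (p a * Real.log (p a / q a) - p a + q a) =
      ∑ a, p a * Real.log (p a / q a) := by
    rw [Finset.sum_add_distrib, Finset.sum_sub_distrib, hps, hqs]
    ring
  rw [hsum] at hterm
  have := le_trans hcs hterm
  nlinarith [this]

/-- Constraint violation bound: under the expected-KL bound
`E_{s∼d_{π_k}}[KL(π_{k+1}∥π_k)[s]] ≤ δ + V` and surrogate constraint satisfaction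
`J_C(π_k) + E_{s∼d_{π_k},a∼π_{k+1}}[Ā_C^{π_k}] ≤ l`, the updated policy satisfies
`J_C(π_{k+1}) ≤ l + sqrt(2(δ+V))·ν_C`. -/
theorem stmt_12 {S A : Type*} [Fintype S] [Fintype A] [Nonempty S]
    (P : S → A → S → ℝ) (Cost : S → A → S → ℝ)
    (πk πn : S → A → ℝ) (d d' : S → ℝ)
    (hPnn : ∀ s a s', 0 ≤ P s a s') (hP : ∀ s a, ∑ s', P s a s' = 1)
    (hπkpos : ∀ s a, 0 < πk s a) (hπk : ∀ s, ∑ a, πk s a = 1)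
    (hπnnn : ∀ s a, 0 ≤ πn s a) (hπn : ∀ s, ∑ a, πn s a = 1)
    (hdnn : ∀ s, 0 ≤ d s) (hdsum : ∑ s, d s = 1)
    (hd'nn : ∀ s, 0 ≤ d' s) (hd'sum : ∑ s, d' s = 1)
    -- d, d' stationary for the chains induced by π_k, π_{k+1}
    (hdstat : ∀ s', ∑ s, d s * ∑ a, πk s a * P s a s' = d s')
    (hd'stat : ∀ s', ∑ s, d' s * ∑ a, πn s a * P s a s' = d' s')
    (JC JC' : ℝ)
    -- average costs of π_k and π_{k+1}
    (hJC : JC = ∑ s, d s * ∑ a, πk s a * ∑ s', P s a s' * Cost s a s')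
    (hJC' : JC' = ∑ s, d' s * ∑ a, πn s a * ∑ s', P s a s' * Cost s a s')
    (VC : S → ℝ)
    -- average-cost Bellman equation for the cost bias of π_k
    (hVC : ∀ s, VC s = ∑ a, πk s a * ∑ s', P s a s' * (Cost s a s' - JC + VC s'))
    (QC : S → A → ℝ)
    (hQC : ∀ s a, QC s a = ∑ s', P s a s' * (Cost s a s' - JC + VC s'))
    (AdvC : S → A → ℝ)
    (hAC : ∀ s a, AdvC s a = QC s a - VC s)
    (σ νC δ Vmax l : ℝ) (hσnn : 0 ≤ σ)
    (hνC : νC = σ * ⨆ s, |∑ a, πn s a * AdvC s a|)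
    (hsens : (1 / 2) * ∑ s, |d' s - d s| ≤
      σ * ∑ s, d s * ((1 / 2) * ∑ a, |πn s a - πk s a|))
    (hKL : ∑ s, d s * ∑ a, πn s a * Real.log (πn s a / πk s a) ≤ δ + Vmax)
    -- surrogate constraint satisfaction
    (hsurr : JC + ∑ s, d s * ∑ a, πn s a * AdvC s a ≤ l) :
    JC' ≤ l + Real.sqrt (2 * (δ + Vmax)) * νC := by
  -- expanded form of QC
  have hQCexp : ∀ s a, QC s a =
      (∑ s', P s a s' * Cost s a s') - JC + ∑ s', P s a s' * VC s' := by
    intro s a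
    rw [hQC]
    calc ∑ s', P s a s' * (Cost s a s' - JC + VC s')
        = ∑ s', (P s a s' * Cost s a s' - JC * P s a s' + P s a s' * VC s') :=
          Finset.sum_congr rfl fun s' _ => by ring
      _ = _ := by
          rw [Finset.sum_add_distrib, Finset.sum_sub_distrib, ← Finset.mul_sum, hP s a]
          ring
  -- per-state expected advantage of πn
  have hrow : ∀ s, ∑ a, πn s a * AdvC s a =
      (∑ a, πn s a * ∑ s', P s a s' * Cost s a s') - JC +
        (∑ a, πn s a * ∑ s', P s a s' * VC s') - VC s := by
    intro s
    calc ∑ a, πn s a * AdvC s a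
        = ∑ a, (πn s a * (∑ s', P s a s' * Cost s a s') - JC * πn s a +
            πn s a * (∑ s', P s a s' * VC s') - VC s * πn s a) :=
          Finset.sum_congr rfl fun a _ => by rw [hAC, hQCexp]; ring
      _ = _ := by
          rw [Finset.sum_sub_distrib, Finset.sum_add_distrib, Finset.sum_sub_distrib,
            ← Finset.mul_sum, ← Finset.mul_sum, hπn s]
          ring
  -- the VC-transition term telescopes by stationarity of d'
  have hT : ∑ s, d' s * ∑ a, πn s a * ∑ s', P s a s' * VC s' = ∑ s, d' s * VC s := by
    have inner : ∀ s, ∑ a, πn s a * ∑ s', P s a s' * VC s' =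
        ∑ s', (∑ a, πn s a * P s a s') * VC s' := by
      intro s
      simp_rw [Finset.mul_sum]
      rw [Finset.sum_comm]
      refine Finset.sum_congr rfl fun s' _ => ?_
      rw [Finset.sum_mul]
      exact Finset.sum_congr rfl fun a _ => by ring
    simp_rw [inner, Finset.mul_sum]
    rw [Finset.sum_comm]
    refine Finset.sum_congr rfl fun s' _ => ?_
    calc ∑ s, d' s * ((∑ a, πn s a * P s a s') * VC s')
        = (∑ s, d' s * ∑ a, πn s a * P s a s') * VC s' := by
          rw [Finset.sum_mul]
          exact Finset.sum_congr rfl fun s _ => by ring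
      _ = d' s' * VC s' := by rw [hd'stat s']
  -- performance difference identity
  have hpd : ∑ s, d' s * ∑ a, πn s a * AdvC s a = JC' - JC := by
    calc ∑ s, d' s * ∑ a, πn s a * AdvC s a
        = ∑ s, (d' s * (∑ a, πn s a * ∑ s', P s a s' * Cost s a s') - JC * d' s +
            d' s * (∑ a, πn s a * ∑ s', P s a s' * VC s') - d' s * VC s) :=
          Finset.sum_congr rfl fun s _ => by rw [hrow s]; ring
      _ = (∑ s, d' s * ∑ a, πn s a * ∑ s', P s a s' * Cost s a s') - JC * (∑ s, d' s) +
            (∑ s, d' s * ∑ a, πn s a * ∑ s', P s a s' * VC s') - ∑ s, d' s * VC s := by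
          rw [Finset.sum_sub_distrib, Finset.sum_add_distrib, Finset.sum_sub_distrib,
            ← Finset.mul_sum]
      _ = JC' - JC := by rw [hd'sum, hT, ← hJC']; ring
  -- Pinsker per state
  have hpins : ∀ s, (1 / 2 * ∑ a, |πn s a - πk s a|) ^ 2 ≤
      1 / 2 * ∑ a, πn s a * Real.log (πn s a / πk s a) := fun s =>
    aux_pinsker (πn s) (πk s) (hπnnn s) (hπkpos s) (hπn s) (hπk s)
  have hKLnn : ∀ s, 0 ≤ ∑ a, πn s a * Real.log (πn s a / πk s a) := by
    intro s
    have := hpins s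
    nlinarith [sq_nonneg (1 / 2 * ∑ a, |πn s a - πk s a|)]
  have hδV : 0 ≤ δ + Vmax :=
    le_trans (Finset.sum_nonneg fun s _ => mul_nonneg (hdnn s) (hKLnn s)) hKL
  -- Jensen / Cauchy-Schwarz on the TV terms
  have hTnn : 0 ≤ ∑ s, d s * (1 / 2 * ∑ a, |πn s a - πk s a|) :=
    Finset.sum_nonneg fun s _ => mul_nonneg (hdnn s)
      (by positivity)
  have hT2 : (∑ s, d s * (1 / 2 * ∑ a, |πn s a - πk s a|)) ^ 2 ≤ (δ + Vmax) / 2 := by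
    have hcs := Finset.sum_mul_sq_le_sq_mul_sq Finset.univ
      (fun s => Real.sqrt (d s)) (fun s => Real.sqrt (d s) * (1 / 2 * ∑ a, |πn s a - πk s a|))
    have e1 : ∑ s, Real.sqrt (d s) * (Real.sqrt (d s) * (1 / 2 * ∑ a, |πn s a - πk s a|)) =
        ∑ s, d s * (1 / 2 * ∑ a, |πn s a - πk s a|) :=
      Finset.sum_congr rfl fun s _ => by
        rw [← mul_assoc, Real.mul_self_sqrt (hdnn s)]
    have e2 : ∑ s, Real.sqrt (d s) ^ 2 = (1:ℝ) := by
      rw [← hdsum]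
      exact Finset.sum_congr rfl fun s _ => Real.sq_sqrt (hdnn s)
    have e3 : ∑ s, (Real.sqrt (d s) * (1 / 2 * ∑ a, |πn s a - πk s a|)) ^ 2 =
        ∑ s, d s * (1 / 2 * ∑ a, |πn s a - πk s a|) ^ 2 :=
      Finset.sum_congr rfl fun s _ => by
        rw [mul_pow, Real.sq_sqrt (hdnn s)]
    rw [e1, e2, e3, one_mul] at hcs
    have hbd : ∑ s, d s * (1 / 2 * ∑ a, |πn s a - πk s a|) ^ 2 ≤ (δ + Vmax) / 2 := by
      have step : ∑ s, d s * (1 / 2 * ∑ a, |πn s a - πk s a|) ^ 2 ≤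
          ∑ s, d s * (1 / 2 * ∑ a, πn s a * Real.log (πn s a / πk s a)) :=
        Finset.sum_le_sum fun s _ => mul_le_mul_of_nonneg_left (hpins s) (hdnn s)
      have step2 : ∑ s, d s * (1 / 2 * ∑ a, πn s a * Real.log (πn s a / πk s a)) =
          1 / 2 * ∑ s, d s * ∑ a, πn s a * Real.log (πn s a / πk s a) := by
        rw [Finset.mul_sum]
        exact Finset.sum_congr rfl fun s _ => by ring
      rw [step2] at step
      linarith
    exact le_trans hcs hbd
  have hTle : ∑ s, d s * (1 / 2 * ∑ a, |πn s a - πk s a|) ≤ Real.sqrt ((δ + Vmax) / 2) := by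
    rw [← Real.sqrt_sq hTnn]
    exact Real.sqrt_le_sqrt hT2
  have hsum_abs : ∑ s, |d' s - d s| ≤ 2 * σ * Real.sqrt ((δ + Vmax) / 2) := by
    have := mul_le_mul_of_nonneg_left hTle hσnn
    linarith
  have hsq2 : Real.sqrt (2 * (δ + Vmax)) = 2 * Real.sqrt ((δ + Vmax) / 2) := by
    rw [show (2:ℝ) * (δ + Vmax) = 2 ^ 2 * ((δ + Vmax) / 2) by ring,
      Real.sqrt_mul (by positivity), Real.sqrt_sq (by norm_num)]
  -- bound via the sup of |expected advantage|
  have hbddM : BddAbove (Set.range fun s => |∑ a, πn s a * AdvC s a|) :=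
    Set.Finite.bddAbove (Set.finite_range _)
  have hMs : ∀ s, |∑ a, πn s a * AdvC s a| ≤ ⨆ s, |∑ a, πn s a * AdvC s a| :=
    fun s => le_ciSup hbddM s
  have hM0 : 0 ≤ ⨆ s, |∑ a, πn s a * AdvC s a| :=
    le_trans (abs_nonneg _) (hMs (Classical.arbitrary S))
  have hdb : ∑ s, (d' s - d s) * ∑ a, πn s a * AdvC s a ≤
      (∑ s, |d' s - d s|) * ⨆ s, |∑ a, πn s a * AdvC s a| := by
    rw [Finset.sum_mul]
    refine Finset.sum_le_sum fun s _ => ?_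
    calc (d' s - d s) * ∑ a, πn s a * AdvC s a
        ≤ |(d' s - d s) * ∑ a, πn s a * AdvC s a| := le_abs_self _
      _ = |d' s - d s| * |∑ a, πn s a * AdvC s a| := abs_mul _ _
      _ ≤ |d' s - d s| * ⨆ s, |∑ a, πn s a * AdvC s a| :=
          mul_le_mul_of_nonneg_left (hMs s) (abs_nonneg _)
  have hfin : ∑ s, (d' s - d s) * ∑ a, πn s a * AdvC s a ≤
      Real.sqrt (2 * (δ + Vmax)) * νC := by
    calc ∑ s, (d' s - d s) * ∑ a, πn s a * AdvC s a
        ≤ (∑ s, |d' s - d s|) * ⨆ s, |∑ a, πn s a * AdvC s a| := hdb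
      _ ≤ (2 * σ * Real.sqrt ((δ + Vmax) / 2)) * ⨆ s, |∑ a, πn s a * AdvC s a| :=
          mul_le_mul_of_nonneg_right hsum_abs hM0
      _ = Real.sqrt (2 * (δ + Vmax)) * νC := by rw [hνC, hsq2]; ring
  have hsplit : ∑ s, d' s * ∑ a, πn s a * AdvC s a =
      ∑ s, d s * ∑ a, πn s a * AdvC s a +
        ∑ s, (d' s - d s) * ∑ a, πn s a * AdvC s a := by
    rw [← Finset.sum_add_distrib]
    exact Finset.sum_congr rfl fun s _ => by ring
  linarith [hpd, hsurr, hfin, hsplit]
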